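/- Let U ⊆ ℂ∖({0} ∪ {z_1,…,z_n}) be open and let h : U → ℂ be holomorphic, nowhere vanishing, with logarithmic derivative h′(x)/h(x) = −Σ_{s=1}^n (m_s/2)/(x − z_s) (i.e. h is a branch of Π_s (x − z_s)^{−m_s/2}). Then for every holomorphic V-valued function f on U and every x ∈ U: (1/(2πi·x)²)·h(x)^{−1}·[ (2πi)²·( x²·(h·f)″(x) + x·(h·f)′(x) ) + D_2(x)(h(x)·f(x)) ] = f″(x) + [ 1/x − Σ_s m_s/(x − z_s) ]·f′(x) + [ −(1/x)·Σ_s (m_s/2)/(x − z_s) + Σ_s (m_s(m_s+2)/4)/(x − z_s)² + Σ_{s≠p} (m_s·m_p/4)/((x − z_s)(x − z_p)) − (μ² + μ(e11−e22) − e11·e22)/(4x²) − (1/x²)·Σ_s ( z_s·(m_s(m_s+2)/4 + K_s(z,μ))/(x − z_s) + z_s²·(m_s(m_s+2)/4)/(x − z_s)² ) ]·f(x). (This is the conjugation formula 𝒟^c = (1/(2πi·x)²)·Π_s(x−z_s)^{m_s/2} · 𝒟 · Π_s(x−z_s)^{−m_s/2} for the universal differential operator 𝒟 = ∂_u² + D_2(x),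 ∂_u = −2πi·x·∂_x.) -/

import Mathlib

open Complex Finset

namespace Paper

noncomputable section

variable {n : ℕ}

/-- The index set of the natural basis of `V = V_{m 0} ⊗ ⋯ ⊗ V_{m (n-1)}`:
the basis vector `v_{i_1} ⊗ ⋯ ⊗ v_{i_n}` corresponds to the index `(i_1,…,i_n)`. -/
abbrev Idx (m : Fin n → ℕ) := ∀ s : Fin n, Fin (m s + 1)

/-- The tensor product `V = V_{m 0} ⊗ ⋯ ⊗ V_{m (n-1)}` realized concretely as the space of
ℂ-valued functions on the index set of its natural basis. -/
abbrev TV (m : Fin n → ℕ) := Idx m → ℂ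

/-- The linear operator `f ↦ (i ↦ c i * f (g i))`; all the basic operators below are of
this form. -/
def mulShift {ι : Type*} (c : ι → ℂ) (g : ι → ι) : Module.End ℂ (ι → ℂ) where
  toFun f i := c i * f (g i)
  map_add' f h := by funext i; simp [mul_add]
  map_smul' a f := by
    funext i
    simp only [Pi.smul_apply, smul_eq_mul, RingHom.id_apply]
    ring

variable (m : Fin n → ℕ)

/-- `e11` acting in the `s`-th tensor factor: `e11 · v_k = ((m-2k)/2) v_k`. -/
def E11 (s : Fin n) : Module.End ℂ (TV m) :=
  mulShift (fun idx => ((m s : ℂ) - 2 * ((idx s : ℕ) : ℂ)) / 2) id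

/-- `e22` acting in the `s`-th tensor factor: `e22 · v_k = -((m-2k)/2) v_k`. -/
def E22 (s : Fin n) : Module.End ℂ (TV m) :=
  mulShift (fun idx => -(((m s : ℂ) - 2 * ((idx s : ℕ) : ℂ)) / 2)) id

/-- `e21` acting in the `s`-th tensor factor: `e21 · v_k = (k+1) v_{k+1}`. -/
def E21 (s : Fin n) : Module.End ℂ (TV m) :=
  mulShift (fun idx => ((idx s : ℕ) : ℂ)) (fun idx => Function.update idx s (idx s - 1))

/-- `e12` acting in the `s`-th tensor factor: `e12 · v_k = (m-k+1) v_{k-1}`. -/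
def E12 (s : Fin n) : Module.End ℂ (TV m) :=
  mulShift (fun idx => (m s : ℂ) - ((idx s : ℕ) : ℂ)) (fun idx => Function.update idx s (idx s + 1))

/-- The diagonal action `e11 = Σ_s e11^{(s)}` on the tensor product. -/
def e11T : Module.End ℂ (TV m) := ∑ s, E11 m s
def e22T : Module.End ℂ (TV m) := ∑ s, E22 m s
def e21T : Module.End ℂ (TV m) := ∑ s, E21 m s
def e12T : Module.End ℂ (TV m) := ∑ s, E12 m s

/-- `v ∈ V[ν]`, i.e. `(e11 - e22) v = ν v`. -/
def inWt (ν : ℤ) (v : TV m) : Prop := (e11T m - e22T m) v = ((ν : ℤ) : ℂ) • v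

/-- The Weyl involution `σ`, acting by `σ v_k = (-1)^k v_{m-k}` in each factor. -/
def sigmaOp : Module.End ℂ (TV m) :=
  mulShift (fun idx => ∏ s, (-1 : ℂ) ^ (m s - (idx s : ℕ))) (fun idx s => (idx s).rev)

/-- The weight of a basis vector: `wt(i) = Σ_s (m_s - 2 i_s)`. -/
def wt (idx : Idx m) : ℤ := ∑ s, ((m s : ℤ) - 2 * ((idx s : ℕ) : ℤ))

/-- The operator `p(κ) = Σ_{k ≥ 0} e21^k e12^k (1/k!) Π_{j=0}^{k-1} (κ + e22 - e11 - j)^{-1}`.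
The operator `e22 - e11` is diagonal in the chosen basis with eigenvalue `-wt(idx)` on the
basis vector labelled by `idx`, so the (partial) inverses `(κ + e22 - e11 - j)^{-1}` are the
diagonal operators with entries `(κ - wt(idx) - j)⁻¹`.  The sum is finite on `V` since
`e12` is nilpotent:  `e12^k = 0` for `k > M = Σ_s m_s`. -/
def pOp (κ : ℂ) : Module.End ℂ (TV m) :=
  ∑ k ∈ Finset.range ((∑ s, m s) + 1),
    (e21T m) ^ k * (e12T m) ^ k *
      mulShift (fun idx => ((k.factorial : ℂ))⁻¹ *
        ∏ j ∈ Finset.range k, (κ - ((wt m idx : ℤ) : ℂ) - (j : ℂ))⁻¹) id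

/-- The operator `𝒜(κ) = σ ∘ p(κ)`. -/
def Aop (κ : ℂ) : Module.End ℂ (TV m) := sigmaOp m * pOp m κ

/-- `Ω₀^{(s,t)} = e11^{(s)} e11^{(t)} + e22^{(s)} e22^{(t)}`. -/
def Om0 (s t : Fin n) : Module.End ℂ (TV m) := E11 m s * E11 m t + E22 m s * E22 m t

/-- `Ω₁₂^{(s,t)} = e12^{(s)} e21^{(t)}`. -/
def Om12 (s t : Fin n) : Module.End ℂ (TV m) := E12 m s * E21 m t

/-- `Ω₂₁^{(s,t)} = e21^{(s)} e12^{(t)}`. -/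
def Om21 (s t : Fin n) : Module.End ℂ (TV m) := E21 m s * E12 m t

/-- The trigonometric r-matrix `r^{(s,t)}(x) = (Ω₊ x + Ω₋)/(x-1)` acting in the `s`-th and
`t`-th tensor factors, where `Ω₊ = ½Ω₀ + Ω₁₂` and `Ω₋ = ½Ω₀ + Ω₂₁`. -/
def rOp (s t : Fin n) (x : ℂ) : Module.End ℂ (TV m) :=
  (x - 1)⁻¹ • (x • ((2 : ℂ)⁻¹ • Om0 m s t + Om12 m s t) + ((2 : ℂ)⁻¹ • Om0 m s t + Om21 m s t))

/-- The trigonometric Gaudin operators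
`K_s(z,μ) = (μ/2)(e11-e22)^{(s)} + Σ_{t ≠ s} r^{(s,t)}(z_s/z_t)`. -/
def Kop (z : Fin n → ℂ) (μ : ℂ) (s : Fin n) : Module.End ℂ (TV m) :=
  (μ / 2) • (E11 m s - E22 m s) + ∑ t ∈ Finset.univ.erase s, rOp m s t (z s / z t)

/-- The matrix entry `M₁₁(x) = 2πi Σ_s (1-x/z_s)⁻¹ e11^{(s)} - πi e11`. -/
def M11 (z : Fin n → ℂ) (x : ℂ) : Module.End ℂ (TV m) :=
  (2 * (Real.pi : ℂ) * I) • (∑ s, (1 - x / z s)⁻¹ • E11 m s) - ((Real.pi : ℂ) * I) • e11T m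

/-- `M₁₂(x) = 2πi Σ_s (1-x/z_s)⁻¹ e21^{(s)} - 2πi e21`. -/
def M12 (z : Fin n → ℂ) (x : ℂ) : Module.End ℂ (TV m) :=
  (2 * (Real.pi : ℂ) * I) • (∑ s, (1 - x / z s)⁻¹ • E21 m s) -
    (2 * (Real.pi : ℂ) * I) • e21T m

/-- `M₂₁(x) = 2πi Σ_s (1-x/z_s)⁻¹ e12^{(s)}`. -/
def M21 (z : Fin n → ℂ) (x : ℂ) : Module.End ℂ (TV m) :=
  (2 * (Real.pi : ℂ) * I) • (∑ s, (1 - x / z s)⁻¹ • E12 m s)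

/-- `M₂₂(x) = 2πi Σ_s (1-x/z_s)⁻¹ e22^{(s)} - πi e22`. -/
def M22 (z : Fin n → ℂ) (x : ℂ) : Module.End ℂ (TV m) :=
  (2 * (Real.pi : ℂ) * I) • (∑ s, (1 - x / z s)⁻¹ • E22 m s) - ((Real.pi : ℂ) * I) • e22T m

/-- The derivative `(dM₂₂/dx)(x) = 2πi Σ_s z_s⁻¹ (1-x/z_s)⁻² e22^{(s)}`. -/
def M22d (z : Fin n → ℂ) (x : ℂ) : Module.End ℂ (TV m) :=
  (2 * (Real.pi : ℂ) * I) • (∑ s, ((z s)⁻¹ * ((1 - x / z s)⁻¹) ^ 2) • E22 m s)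

/-- The coefficient `D₂(x)` of the universal differential operator
`𝒟 = cdet [[∂_u - πiμ + M₁₁, M₁₂],[M₂₁, ∂_u + πiμ + M₂₂]] = ∂_u² + D₁(x) ∂_u + D₂(x)`
(where `x = e^{-2πiu}`, `∂_u = -2πi x ∂_x`), namely
`D₂(x) = (-πiμ + M₁₁(x)) ∘ (πiμ + M₂₂(x)) - 2πi x (dM₂₂/dx)(x) - M₂₁(x) ∘ M₁₂(x)`. -/
def D2 (z : Fin n → ℂ) (μ : ℂ) (x : ℂ) : Module.End ℂ (TV m) :=
  (-(((Real.pi : ℂ) * I * μ)) • (1 : Module.End ℂ (TV m)) + M11 m z x) *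
      ((((Real.pi : ℂ) * I * μ)) • (1 : Module.End ℂ (TV m)) + M22 m z x)
    - (2 * (Real.pi : ℂ) * I * x) • M22d m z x
    - M21 m z x * M12 m z x

/-- The Bethe ansatz equations for the triple `(z; μ; V[ν])`, `ν = M - 2m'`:  `t` is a tuple
of pairwise distinct complex numbers, each nonzero and distinct from every `z_s`, with
`(1 - μ + ν/2)/t_i + Σ_{j≠i} 2/(t_i - t_j) - Σ_s m_s/(t_i - z_s) = 0` for all `i`. -/
def BAE (z : Fin n → ℂ) (μ : ℂ) {m' : ℕ} (t : Fin m' → ℂ) : Prop :=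
  Function.Injective t ∧ (∀ i, t i ≠ 0) ∧ (∀ i s, t i ≠ z s) ∧
    ∀ i, (1 - μ + ((∑ s, (m s : ℂ)) - 2 * (m' : ℂ)) / 2) / t i
        + (∑ j ∈ Finset.univ.erase i, 2 / (t i - t j))
        - ∑ s, (m s : ℂ) / (t i - z s) = 0

/-- The partial sum `ℓ_1 + ⋯ + ℓ_{s-1}` (0-based). -/
def pref (ℓv : Idx m) (s : Fin n) : ℕ :=
  ∑ u ∈ Finset.univ.filter (fun u => u < s), (ℓv u : ℕ)

/-- Extension of a tuple `t : Fin m' → ℂ` to a function on `ℕ` (by zero). -/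
def extt {m' : ℕ} (t : Fin m' → ℂ) : ℕ → ℂ := fun i => if h : i < m' then t ⟨i, h⟩ else 0

/-- The coordinate `ω_ℓ(t,z) = Σ_{ρ ∈ S_{m'}} Π_{s=1}^n Π_{i=ℓ_1+⋯+ℓ_{s-1}+1}^{ℓ_1+⋯+ℓ_s}
(t_{ρ(i)} - z_s)⁻¹` of the weight function. -/
def omegaCoeff (z : Fin n → ℂ) {m' : ℕ} (t : Fin m' → ℂ) (ℓv : Idx m) : ℂ :=
  ∑ ρ : Equiv.Perm (Fin m'), ∏ s : Fin n,
    ∏ i ∈ Finset.Ico (pref m ℓv s) (pref m ℓv s + (ℓv s : ℕ)), (extt (t ∘ ρ) i - z s)⁻¹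

/-- The Bethe vector (weight function) `ω(t,z) = Σ_{ℓ ∈ C} ω_ℓ(t,z) v_ℓ ∈ V[M - 2m']`. -/
def betheVec (z : Fin n → ℂ) {m' : ℕ} (t : Fin m' → ℂ) : TV m :=
  fun ℓv => if (∑ s, ((ℓv s : ℕ))) = m' then omegaCoeff m z t ℓv else 0

/-- The eigenvalue `k_s(t,z,μ) = (m_s/2)[(μ - ν/2 + m_s/2) + Σ_{p≠s} m_p z_s/(z_s-z_p)
+ 2 Σ_i z_s/(t_i - z_s)]`, with `ν = M - 2m'`. -/
def kEig (z : Fin n → ℂ) (μ : ℂ) {m' : ℕ} (t : Fin m' → ℂ) (s : Fin n) : ℂ :=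
  ((m s : ℂ) / 2) * ((μ - ((∑ u, (m u : ℂ)) - 2 * (m' : ℂ)) / 2 + (m s : ℂ) / 2)
    + (∑ p ∈ Finset.univ.erase s, (m p : ℂ) * z s / (z s - z p))
    + 2 * ∑ i, z s / (t i - z s))

/-- The scalar eigenvalue function `E₂(x, t, z, μ)` of `D₂(x)` on the Bethe vector, i.e.
the coefficient of the fundamental differential operator `ℰ = ∂_u² + E₂(x)`. -/
def E2fun (z : Fin n → ℂ) (μ : ℂ) {m' : ℕ} (t : Fin m' → ℂ) (x : ℂ) : ℂ :=
  (2 * (Real.pi : ℂ) * I) ^ 2 *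
    (-(μ + ((∑ u, (m u : ℂ)) - 2 * (m' : ℂ)) / 2) ^ 2 / 4
      + ∑ s, (((m s : ℂ) * ((m s : ℂ) + 2) / 4 + kEig m z μ t s) / (1 - x / z s)
          - ((m s : ℂ) * ((m s : ℂ) + 2) / 4) / (1 - x / z s) ^ 2))



/-- The right-hand side of the conjugation formula of Theorem 8.1: the `x`-dependent
`End(V)`-valued coefficient of the zeroth-order term of `𝒟ᶜ`. -/
noncomputable def DconjCoeff (n : ℕ) (m : Fin n → ℕ) (z : Fin n → ℂ) (μ : ℂ) (x : ℂ) :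
    Module.End ℂ (TV m) :=
  (-(1 / x) * (∑ s, ((m s : ℂ) / 2) / (x - z s))
      + (∑ s, ((m s : ℂ) * ((m s : ℂ) + 2) / 4) / (x - z s) ^ 2)
      + ∑ s, ∑ p ∈ Finset.univ.erase s,
          ((m s : ℂ) * (m p : ℂ) / 4) / ((x - z s) * (x - z p))) •
      (1 : Module.End ℂ (TV m))
    - ((4 : ℂ) * x ^ 2)⁻¹ • (μ ^ 2 • (1 : Module.End ℂ (TV m)) + μ • (e11T m - e22T m)
        - e11T m * e22T m)
    - (x ^ 2)⁻¹ • ∑ s,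
        ((z s / (x - z s)) • (((m s : ℂ) * ((m s : ℂ) + 2) / 4) • (1 : Module.End ℂ (TV m))
            + Kop m z μ s)
          + ((z s) ^ 2 * ((m s : ℂ) * ((m s : ℂ) + 2) / 4) / (x - z s) ^ 2) •
            (1 : Module.End ℂ (TV m)))

/- ######################################################################### -/
/- Auxiliary development for the proof of statement16                        -/
/- ######################################################################### -/

section Aux

@[simp] lemma mulShift_apply {ι : Type*} (c : ι → ℂ) (g : ι → ι) (f : ι → ℂ) (i : ι) :
    mulShift c g f i = c i * f (g i) := rfl

lemma mulShift_mul {ι : Type*} (c d : ι → ℂ) (g k : ι → ι) :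
    mulShift c g * mulShift d k
      = mulShift (fun i => c i * d (g i)) (fun i => k (g i)) := by
  ext f i
  simp [Module.End.mul_apply, mul_assoc]

lemma mulShift_add {ι : Type*} (c d : ι → ℂ) (g : ι → ι) :
    mulShift c g + mulShift d g = mulShift (fun i => c i + d i) g := by
  ext f i
  simp [add_mul]

lemma mulShift_sub {ι : Type*} (c d : ι → ℂ) (g : ι → ι) :
    mulShift c g - mulShift d g = mulShift (fun i => c i - d i) g := by
  ext f i
  simp [sub_mul]

lemma mulShift_smul {ι : Type*} (a : ℂ) (c : ι → ℂ) (g : ι → ι) :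
    a • mulShift c g = mulShift (fun i => a * c i) g := by
  ext f i
  simp [mul_assoc]

lemma mulShift_sum {ι σ : Type*} (F : Finset σ) (c : σ → ι → ℂ) (g : ι → ι) :
    ∑ s ∈ F, mulShift (c s) g = mulShift (fun i => ∑ s ∈ F, c s i) g := by
  ext f i
  simp [Finset.sum_mul]

lemma mulShift_one {ι : Type*} :
    (1 : Module.End ℂ (ι → ℂ)) = mulShift (fun _ => 1) id := by
  ext f i
  simp

lemma mulShift_congr {ι : Type*} {c d : ι → ℂ} (g : ι → ι) (h : ∀ i, c i = d i) :
    mulShift c g = mulShift d g := by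
  have : c = d := funext h
  rw [this]

/-- The diagonal entries of `E11`. -/
def al (m : Fin n → ℕ) (s : Fin n) : Idx m → ℂ :=
  fun i => ((m s : ℂ) - 2 * ((i s : ℕ) : ℂ)) / 2

/-- The diagonal entries of `E12 * E21` (same site). -/
def bd (m : Fin n → ℕ) (s : Fin n) : Idx m → ℂ :=
  fun i => ((m s : ℂ) - ((i s : ℕ) : ℂ)) * (((i s : ℕ) : ℂ) + 1)

/-- `(1 - x/z_s)⁻¹`. -/
def aa (z : Fin n → ℂ) (x : ℂ) (s : Fin n) : ℂ := (1 - x / z s)⁻¹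

lemma E11_eq (s : Fin n) : E11 m s = mulShift (al m s) id := rfl

lemma E22_eq (s : Fin n) : E22 m s = mulShift (fun i => -(al m s i)) id := rfl

lemma e11T_eq : e11T m = mulShift (fun i => ∑ s, al m s i) id := by
  rw [e11T]
  simp only [E11_eq]
  exact mulShift_sum _ _ _

lemma e22T_eq : e22T m = mulShift (fun i => -∑ s, al m s i) id := by
  rw [e22T]
  simp only [E22_eq]
  rw [mulShift_sum]
  exact mulShift_congr _ fun i => by rw [← Finset.sum_neg_distrib]

/-- diagonal value of `E12 s * E21 s`. -/
lemma E12_mul_E21_same (s : Fin n) :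
    E12 m s * E21 m s = mulShift (bd m s) id := by
  rw [E12, E21, mulShift_mul]
  congr 1
  · funext i
    simp only [Function.update_self, bd]
    rcases eq_or_ne (i s) (Fin.last (m s)) with h | h
    · simp [h, Fin.val_last]
    · rw [Fin.val_add_one, if_neg h]
      push_cast
      ring
  · funext i
    simp only [Function.update_self, add_sub_cancel_right, Function.update_idem,
      Function.update_eq_self, id_eq]

lemma E21_mul_E12_comm {s t : Fin n} (h : s ≠ t) :
    E21 m s * E12 m t = E12 m t * E21 m s := by
  rw [E21, E12, mulShift_mul, mulShift_mul]
  congr 1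
  · funext i
    rw [Function.update_of_ne h.symm, Function.update_of_ne h]
    ring
  · funext i
    rw [Function.update_of_ne h.symm, Function.update_of_ne h,
      Function.update_comm h]

lemma sum_univ_split {M : Type*} [AddCommMonoid M] (F : Fin n → Fin n → M) :
    ∑ s : Fin n, ∑ t : Fin n, F s t
      = (∑ s, F s s) + ∑ s, ∑ t ∈ Finset.univ.erase s, F s t := by
  rw [← Finset.sum_add_distrib]
  exact Finset.sum_congr rfl fun s _ =>
    (Finset.add_sum_erase _ _ (Finset.mem_univ s)).symm

lemma sum_erase_swap {M : Type*} [AddCommMonoid M] (F : Fin n → Fin n → M) :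
    ∑ s : Fin n, ∑ t ∈ Finset.univ.erase s, F s t
      = ∑ s : Fin n, ∑ t ∈ Finset.univ.erase s, F t s := by
  exact Finset.sum_comm' (fun x y => by
    simp only [Finset.mem_univ, Finset.mem_erase, true_and, and_true]
    exact ⟨fun h => h.symm, fun h => h.symm⟩)

lemma sum_erase_antisym (F : Fin n → Fin n → ℂ)
    (h : ∀ s t, s ≠ t → F s t + F t s = 0) :
    ∑ s : Fin n, ∑ t ∈ Finset.univ.erase s, F s t = 0 := by
  have h4 : (∑ s : Fin n, ∑ t ∈ Finset.univ.erase s, F s t)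
      = -(∑ s : Fin n, ∑ t ∈ Finset.univ.erase s, F s t) := by
    conv_lhs => rw [sum_erase_swap]
    rw [← Finset.sum_neg_distrib]
    refine Finset.sum_congr rfl fun s _ => ?_
    rw [← Finset.sum_neg_distrib]
    refine Finset.sum_congr rfl fun t ht => ?_
    have hts : t ≠ s := (Finset.mem_erase.mp ht).1
    exact eq_neg_of_add_eq_zero_right (h s t (fun e => hts e.symm))
  exact add_self_eq_zero.mp (add_eq_zero_iff_eq_neg.mpr h4)

lemma mulShift_mul_diag {ι : Type*} (c d : ι → ℂ) :
    mulShift c id * mulShift d id = mulShift (fun i => c i * d i) id := by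
  rw [mulShift_mul]; rfl

lemma M11_eq (z : Fin n → ℂ) (x : ℂ) :
    M11 m z x
      = mulShift (fun i => ∑ s, (2*(Real.pi:ℂ)*I*aa z x s - (Real.pi:ℂ)*I) * al m s i) id := by
  rw [M11, e11T_eq]
  simp only [E11_eq, mulShift_smul, mulShift_sum]
  rw [mulShift_sub]
  refine mulShift_congr _ fun i => ?_
  simp only [aa, Finset.mul_sum]
  rw [← Finset.sum_sub_distrib]
  exact Finset.sum_congr rfl fun s _ => by ring

lemma M22_eq (z : Fin n → ℂ) (x : ℂ) :
    M22 m z x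
      = mulShift (fun i => -∑ s, (2*(Real.pi:ℂ)*I*aa z x s - (Real.pi:ℂ)*I) * al m s i) id := by
  rw [M22, e22T_eq]
  simp only [E22_eq, mulShift_smul, mulShift_sum]
  rw [mulShift_sub]
  refine mulShift_congr _ fun i => ?_
  simp only [aa, mul_neg, neg_neg, sub_neg_eq_add, Finset.sum_neg_distrib, Finset.mul_sum]
  rw [← Finset.sum_neg_distrib, ← Finset.sum_add_distrib, ← Finset.sum_neg_distrib]
  exact Finset.sum_congr rfl fun s _ => by ring

lemma M22d_eq (z : Fin n → ℂ) (x : ℂ) :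
    (2 * (Real.pi:ℂ) * I * x) • M22d m z x
      = mulShift (fun i =>
          -∑ s, (2*(Real.pi:ℂ)*I)^2 * x * (z s)⁻¹ * (aa z x s)^2 * al m s i) id := by
  rw [M22d]
  simp only [E22_eq, mulShift_smul, mulShift_sum]
  refine mulShift_congr _ fun i => ?_
  simp only [aa, mul_neg, neg_neg, Finset.mul_sum, ← Finset.sum_neg_distrib]
  exact Finset.sum_congr rfl fun s _ => by ring

lemma M21_eq (z : Fin n → ℂ) (x : ℂ) :
    M21 m z x = ∑ s, (2*(Real.pi:ℂ)*I * aa z x s) • E12 m s := by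
  rw [M21, Finset.smul_sum]
  exact Finset.sum_congr rfl fun s _ => by rw [smul_smul, aa]

lemma M12_eq (z : Fin n → ℂ) (x : ℂ) :
    M12 m z x = ∑ t, (2*(Real.pi:ℂ)*I * (aa z x t - 1)) • E21 m t := by
  rw [M12, e21T, Finset.smul_sum, Finset.smul_sum, ← Finset.sum_sub_distrib]
  refine Finset.sum_congr rfl fun t _ => ?_
  rw [smul_smul, ← sub_smul]
  congr 1
  rw [aa]
  ring

lemma M21M12 (z : Fin n → ℂ) (x : ℂ) :
    M21 m z x * M12 m z x
      = ∑ s, ∑ t, ((2*(Real.pi:ℂ)*I)^2 * aa z x s * (aa z x t - 1)) • (E12 m s * E21 m t) := by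
  rw [M21_eq, M12_eq, Finset.sum_mul_sum]
  refine Finset.sum_congr rfl fun s _ => Finset.sum_congr rfl fun t _ => ?_
  rw [smul_mul_smul_comm]
  congr 1
  ring

def qfun (m : Fin n → ℕ) (z : Fin n → ℂ) (μ x : ℂ) : Idx m → ℂ :=
  fun i => -((Real.pi:ℂ)*I*μ) + ∑ s, (2*(Real.pi:ℂ)*I*aa z x s - (Real.pi:ℂ)*I) * al m s i

def dP (m : Fin n → ℕ) (z : Fin n → ℂ) (μ x : ℂ) : Idx m → ℂ := fun i =>
  -(qfun m z μ x i)^2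
    + ∑ s, (2*(Real.pi:ℂ)*I)^2 * x * (z s)⁻¹ * (aa z x s)^2 * al m s i
    - ∑ s, (2*(Real.pi:ℂ)*I)^2 * aa z x s * (aa z x s - 1) * bd m s i

lemma D2_eq (z : Fin n → ℂ) (μ x : ℂ) :
    D2 m z μ x = mulShift (dP m z μ x) id
      + ∑ s, ∑ t ∈ Finset.univ.erase s,
          (-((2*(Real.pi:ℂ)*I)^2 * aa z x s * (aa z x t - 1))) • (E12 m s * E21 m t) := by
  have hX1 : (-(((Real.pi:ℂ) * I * μ))) • (1 : Module.End ℂ (TV m)) + M11 m z x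
      = mulShift (qfun m z μ x) id := by
    rw [M11_eq, mulShift_one, mulShift_smul, mulShift_add]
    exact mulShift_congr _ fun i => by simp only [qfun]; ring
  have hX2 : (((Real.pi:ℂ) * I * μ)) • (1 : Module.End ℂ (TV m)) + M22 m z x
      = mulShift (fun i => -(qfun m z μ x i)) id := by
    rw [M22_eq, mulShift_one, mulShift_smul, mulShift_add]
    exact mulShift_congr _ fun i => by simp only [qfun]; ring
  rw [D2, hX1, hX2, mulShift_mul_diag, M22d_eq, M21M12,
    sum_univ_split (F := fun s t =>
      ((2*(Real.pi:ℂ)*I)^2 * aa z x s * (aa z x t - 1)) • (E12 m s * E21 m t))]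
  simp only [E12_mul_E21_same, mulShift_smul]
  rw [mulShift_sum, sub_add_eq_sub_sub, mulShift_sub, mulShift_sub, sub_eq_add_neg]
  congr 1
  · refine mulShift_congr _ fun i => ?_
    simp only [dP]
    have h3 : ∑ s, (2*(Real.pi:ℂ)*I)^2 * aa z x s * (aa z x s - 1) * bd m s i
        = ∑ s, ((2*(Real.pi:ℂ)*I)^2 * aa z x s * (aa z x s - 1)) * bd m s i :=
      Finset.sum_congr rfl fun s _ => by ring
    rw [h3]
    ring
  · rw [← Finset.sum_neg_distrib]
    refine Finset.sum_congr rfl fun s _ => ?_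
    rw [← Finset.sum_neg_distrib]
    exact Finset.sum_congr rfl fun t _ => (neg_smul _ _).symm

lemma Om0_eq (s t : Fin n) :
    Om0 m s t = mulShift (fun i => 2 * (al m s i * al m t i)) id := by
  rw [Om0, E11_eq, E22_eq, E11_eq, E22_eq, mulShift_mul_diag, mulShift_mul_diag,
    mulShift_add]
  exact mulShift_congr _ fun i => by ring

lemma rOp_eq {s t : Fin n} (h : s ≠ t) (y : ℂ) :
    rOp m s t y = mulShift (fun i => (y - 1)⁻¹ * (y + 1) * (al m s i * al m t i)) id
      + (((y - 1)⁻¹ * y) • (E12 m s * E21 m t) + (y - 1)⁻¹ • (E12 m t * E21 m s)) := by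
  have h0 : rOp m s t y = ((y - 1)⁻¹ * (y + 1) * 2⁻¹) • Om0 m s t
      + (((y - 1)⁻¹ * y) • Om12 m s t + (y - 1)⁻¹ • Om21 m s t) := by
    rw [rOp]
    module
  rw [h0, Om0_eq, Om12, Om21, E21_mul_E12_comm m h, mulShift_smul]
  congr 1
  exact mulShift_congr _ fun i => by ring

lemma Kop_eq (z : Fin n → ℂ) (μ : ℂ) (s : Fin n) :
    Kop m z μ s = mulShift (fun i => μ * al m s i
        + ∑ t ∈ Finset.univ.erase s,
            (z s/z t - 1)⁻¹ * (z s/z t + 1) * (al m s i * al m t i)) id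
      + ∑ t ∈ Finset.univ.erase s,
          (((z s/z t - 1)⁻¹ * (z s/z t)) • (E12 m s * E21 m t)
            + (z s/z t - 1)⁻¹ • (E12 m t * E21 m s)) := by
  rw [Kop]
  have h1 : (μ/2) • (E11 m s - E22 m s) = mulShift (fun i => μ * al m s i) id := by
    rw [E11_eq, E22_eq, mulShift_sub, mulShift_smul]
    exact mulShift_congr _ fun i => by ring
  have h2 : ∑ t ∈ Finset.univ.erase s, rOp m s t (z s / z t)
      = mulShift (fun i => ∑ t ∈ Finset.univ.erase s,
            (z s/z t - 1)⁻¹ * (z s/z t + 1) * (al m s i * al m t i)) id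
        + ∑ t ∈ Finset.univ.erase s,
            (((z s/z t - 1)⁻¹ * (z s/z t)) • (E12 m s * E21 m t)
              + (z s/z t - 1)⁻¹ • (E12 m t * E21 m s)) := by
    rw [Finset.sum_congr rfl
      (fun t ht => rOp_eq m ((Finset.mem_erase.mp ht).1).symm (z s / z t)),
      Finset.sum_add_distrib, mulShift_sum]
  rw [h1, h2, ← add_assoc, mulShift_add]

def dQ (m : Fin n → ℕ) (z : Fin n → ℂ) (μ x : ℂ) : Idx m → ℂ := fun i =>
  (2*(Real.pi:ℂ)*I*x)^2 *
    ((-(1 / x) * (∑ s, ((m s : ℂ) / 2) / (x - z s))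
        + (∑ s, ((m s : ℂ) * ((m s : ℂ) + 2) / 4) / (x - z s) ^ 2)
        + ∑ s, ∑ p ∈ Finset.univ.erase s,
            ((m s : ℂ) * (m p : ℂ) / 4) / ((x - z s) * (x - z p)))
     - ((4:ℂ)*x^2)⁻¹ * (μ^2 + μ * (2 * ∑ s, al m s i) - (-(∑ s, al m s i)^2))
     - (x^2)⁻¹ * ∑ s, ((z s/(x - z s)) * ((m s:ℂ)*((m s:ℂ)+2)/4
           + (μ * al m s i + ∑ t ∈ Finset.univ.erase s,
               (z s/z t - 1)⁻¹ * (z s/z t + 1) * (al m s i * al m t i)))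
        + (z s)^2 * ((m s:ℂ)*((m s:ℂ)+2)/4)/(x - z s)^2)
     - ((∑ s, ((m s:ℂ)/2)/(x - z s))^2 + (∑ s, ((m s:ℂ)/2)/(x - z s)^2)
          - (∑ s, ((m s:ℂ)/2)/(x - z s))/x))

lemma RHS_eq (z : Fin n → ℂ) (μ x : ℂ) :
    ((2*(Real.pi:ℂ)*I*x)^2) • (DconjCoeff n m z μ x
        - ((∑ s, ((m s:ℂ)/2)/(x - z s))^2 + (∑ s, ((m s:ℂ)/2)/(x - z s)^2)
            - (∑ s, ((m s:ℂ)/2)/(x - z s))/x) • (1 : Module.End ℂ (TV m)))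
      = mulShift (dQ m z μ x) id
        + ∑ s, ∑ t ∈ Finset.univ.erase s,
            ((2*(Real.pi:ℂ)*I*x)^2 * (-((x^2)⁻¹
              * ((z s/(x - z s)) * ((z s/z t - 1)⁻¹ * (z s/z t))
                 + (z t/(x - z t)) * ((z t/z s - 1)⁻¹ * 1)))))
              • (E12 m s * E21 m t) := by
  classical
  have h2 : μ^2 • (1:Module.End ℂ (TV m)) + μ • (e11T m - e22T m) - e11T m * e22T m
      = mulShift (fun i => μ^2 + μ * (2*∑ s, al m s i) - (-(∑ s, al m s i)^2)) id := by
    simp only [e11T_eq, e22T_eq, mulShift_one, mulShift_smul, mulShift_sub, mulShift_add,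
      mulShift_mul_diag]
    exact mulShift_congr _ fun i => by ring
  have h3 : ∀ s : Fin n,
      (z s / (x - z s)) • (((m s:ℂ)*((m s:ℂ)+2)/4) • (1:Module.End ℂ (TV m)) + Kop m z μ s)
        + ((z s)^2 * ((m s:ℂ)*((m s:ℂ)+2)/4)/(x - z s)^2) • (1:Module.End ℂ (TV m))
      = mulShift (fun i => (z s/(x - z s)) * ((m s:ℂ)*((m s:ℂ)+2)/4
            + (μ * al m s i + ∑ t ∈ Finset.univ.erase s,
                (z s/z t - 1)⁻¹ * (z s/z t + 1) * (al m s i * al m t i)))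
          + (z s)^2 * ((m s:ℂ)*((m s:ℂ)+2)/4)/(x - z s)^2) id
        + ∑ t ∈ Finset.univ.erase s,
            (((z s/(x - z s)) * ((z s/z t - 1)⁻¹ * (z s/z t))) • (E12 m s * E21 m t)
              + ((z s/(x - z s)) * ((z s/z t - 1)⁻¹ * 1)) • (E12 m t * E21 m s)) := by
    intro s
    rw [Kop_eq, mulShift_one, mulShift_smul, ← add_assoc, mulShift_smul, mulShift_add,
      smul_add, mulShift_smul, Finset.smul_sum, add_right_comm, mulShift_add]
    congr 1
    · exact mulShift_congr _ fun i => by ring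
    · refine Finset.sum_congr rfl fun t _ => ?_
      rw [smul_add, smul_smul, smul_smul]
      congr 2
      ring
  have h4 : ∑ s, ((z s / (x - z s)) •
        (((m s:ℂ)*((m s:ℂ)+2)/4) • (1:Module.End ℂ (TV m)) + Kop m z μ s)
        + ((z s)^2 * ((m s:ℂ)*((m s:ℂ)+2)/4)/(x - z s)^2) • (1:Module.End ℂ (TV m)))
      = mulShift (fun i => ∑ s, ((z s/(x - z s)) * ((m s:ℂ)*((m s:ℂ)+2)/4
            + (μ * al m s i + ∑ t ∈ Finset.univ.erase s,
                (z s/z t - 1)⁻¹ * (z s/z t + 1) * (al m s i * al m t i)))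
          + (z s)^2 * ((m s:ℂ)*((m s:ℂ)+2)/4)/(x - z s)^2)) id
        + ∑ s, ∑ t ∈ Finset.univ.erase s,
            ((((z s/(x - z s)) * ((z s/z t - 1)⁻¹ * (z s/z t)))
                + ((z t/(x - z t)) * ((z t/z s - 1)⁻¹ * 1))) • (E12 m s * E21 m t)) := by
    rw [Finset.sum_congr rfl (fun s _ => h3 s), Finset.sum_add_distrib, mulShift_sum]
    congr 1
    have h5 : ∀ s, ∑ t ∈ Finset.univ.erase s,
        (((z s/(x - z s)) * ((z s/z t - 1)⁻¹ * (z s/z t))) • (E12 m s * E21 m t)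
          + ((z s/(x - z s)) * ((z s/z t - 1)⁻¹ * 1)) • (E12 m t * E21 m s))
        = (∑ t ∈ Finset.univ.erase s,
            ((z s/(x - z s)) * ((z s/z t - 1)⁻¹ * (z s/z t))) • (E12 m s * E21 m t))
          + ∑ t ∈ Finset.univ.erase s,
            ((z s/(x - z s)) * ((z s/z t - 1)⁻¹ * 1)) • (E12 m t * E21 m s) :=
      fun s => Finset.sum_add_distrib
    rw [Finset.sum_congr rfl (fun s _ => h5 s), Finset.sum_add_distrib,
      sum_erase_swap (F := fun s t =>
        ((z s/(x - z s)) * ((z s/z t - 1)⁻¹ * 1)) • (E12 m t * E21 m s)),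
      ← Finset.sum_add_distrib]
    refine Finset.sum_congr rfl fun s _ => ?_
    rw [← Finset.sum_add_distrib]
    exact Finset.sum_congr rfl fun t _ => (add_smul _ _ _).symm
  rw [DconjCoeff, h2, h4, mulShift_one, mulShift_smul, mulShift_smul, mulShift_smul,
    smul_add, mulShift_smul, Finset.smul_sum, sub_add_eq_sub_sub, sub_right_comm,
    mulShift_sub, mulShift_sub, mulShift_sub, smul_sub, mulShift_smul, Finset.smul_sum]
  rw [sub_eq_add_neg, ← Finset.sum_neg_distrib]
  congr 1
  · exact mulShift_congr _ fun i => by simp only [dQ]; ring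
  · refine Finset.sum_congr rfl fun s _ => ?_
    simp only [Finset.smul_sum, smul_smul]
    rw [← Finset.sum_neg_distrib]
    refine Finset.sum_congr rfl fun t _ => ?_
    rw [← neg_smul]
    congr 1
    ring

set_option maxHeartbeats 1000000

lemma persA (c Mc k zz xx : ℂ) (h1 : zz ≠ 0) (h2 : xx - zz ≠ 0) (h3 : zz - xx ≠ 0) :
    -c * ((1 - xx/zz)⁻¹ * ((Mc - 2*k)/2) * ((1 - xx/zz)⁻¹ * ((Mc - 2*k)/2)))
      + c * ((1 - xx/zz)⁻¹ * ((Mc - 2*k)/2) * ((Mc - 2*k)/2))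
      + c * xx * zz⁻¹ * ((1 - xx/zz)⁻¹)^2 * ((Mc - 2*k)/2)
      - c * (1 - xx/zz)⁻¹ * ((1 - xx/zz)⁻¹ - 1) * ((Mc - k)*(k+1))
      + c * (zz/(xx - zz) * (Mc*(Mc+2)/4) + zz^2*(Mc*(Mc+2)/4)/(xx - zz)^2) = 0 := by
  have e1 : (1 - xx/zz)⁻¹ = zz/(zz - xx) := by rw [one_sub_div h1, inv_div]
  have hu : (zz - xx) * (zz - xx)⁻¹ = 1 := mul_inv_cancel₀ h3
  have hv : zz * zz⁻¹ = 1 := mul_inv_cancel₀ h1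
  rw [e1, show xx - zz = -(zz - xx) from by ring, div_neg, neg_sq,
    show zz^2*(Mc*(Mc+2)/4)/(zz - xx)^2 = (zz/(zz - xx))^2 * (Mc*(Mc+2)/4) from by
      rw [div_pow]; ring]
  linear_combination (c*xx*zz*((zz - xx)⁻¹)^2*((Mc - 2*k)/2)) * hv
    + (-(c*zz*((Mc - 2*k)/2)*(zz - xx)⁻¹)) * hu

lemma persB (c xx zs zt als alt : ℂ) (h1 : zs ≠ 0) (h2 : zt ≠ 0) (h3 : zs - zt ≠ 0)
    (h6 : xx - zs ≠ 0) (h7 : xx - zt ≠ 0) (h6' : zs - xx ≠ 0) (h7' : zt - xx ≠ 0) :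
    (-c * ((1 - xx/zs)⁻¹ * als * ((1 - xx/zt)⁻¹ * alt))
        + c * ((1 - xx/zs)⁻¹ * als * alt)
        + c * (zs/(xx - zs) * ((zs/zt - 1)⁻¹ * (zs/zt + 1) * (als * alt))))
      + (-c * ((1 - xx/zt)⁻¹ * alt * ((1 - xx/zs)⁻¹ * als))
        + c * ((1 - xx/zt)⁻¹ * alt * als)
        + c * (zt/(xx - zt) * ((zt/zs - 1)⁻¹ * (zt/zs + 1) * (alt * als)))) = 0 := by
  have e1 : (1 - xx/zs)⁻¹ = zs/(zs - xx) := by rw [one_sub_div h1, inv_div]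
  have e2 : (1 - xx/zt)⁻¹ = zt/(zt - xx) := by rw [one_sub_div h2, inv_div]
  have e3 : (zs/zt - 1)⁻¹ = zt/(zs - zt) := by rw [div_sub_one h2, inv_div]
  have e4 : (zt/zs - 1)⁻¹ = -(zs/(zs - zt)) := by
    rw [div_sub_one h1, inv_div, show zt - zs = -(zs - zt) from by ring, div_neg]
  have hus : (zs - xx) * (zs - xx)⁻¹ = 1 := mul_inv_cancel₀ h6'
  have hut : (zt - xx) * (zt - xx)⁻¹ = 1 := mul_inv_cancel₀ h7'
  have hw : (zs - zt) * (zs - zt)⁻¹ = 1 := mul_inv_cancel₀ h3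
  have hvs : zs * zs⁻¹ = 1 := mul_inv_cancel₀ h1
  have hvt : zt * zt⁻¹ = 1 := mul_inv_cancel₀ h2
  rw [e1, e2, e3, e4, show xx - zs = -(zs - xx) from by ring,
    show xx - zt = -(zt - xx) from by ring, div_neg, div_neg]
  linear_combination (-(c*(als*alt)*(zs - zt)⁻¹*(zs/(zs - xx))*zs)) * hvt
    + (c*(als*alt)*(zs - zt)⁻¹*(zt/(zt - xx))*zt) * hvs
    + (-(c*(als*alt)*(-2*(zs/(zs - xx))*(zt/(zt - xx)) + zs/(zs - xx) + zt/(zt - xx)))) * hw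
    + (2*c*(als*alt)*(zs - zt)⁻¹*(zs/(zs - xx))*zt) * hut
    + (-(2*c*(als*alt)*(zs - zt)⁻¹*(zt/(zt - xx))*zs)) * hus

lemma persC (c xx zs zt : ℂ) (h1 : zs ≠ 0) (h2 : zt ≠ 0) (h3 : zs - zt ≠ 0)
    (h6 : xx - zs ≠ 0) (h7 : xx - zt ≠ 0) (h6' : zs - xx ≠ 0) (h7' : zt - xx ≠ 0)
    (hx : xx ≠ 0) :
    -(c^2 * (1 - xx/zs)⁻¹ * ((1 - xx/zt)⁻¹ - 1))
      = (c*xx)^2 * (-((xx^2)⁻¹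
          * (zs/(xx - zs) * ((zs/zt - 1)⁻¹ * (zs/zt))
             + zt/(xx - zt) * ((zt/zs - 1)⁻¹ * 1)))) := by
  have e1 : (1 - xx/zs)⁻¹ = zs/(zs - xx) := by rw [one_sub_div h1, inv_div]
  have e2 : (1 - xx/zt)⁻¹ = zt/(zt - xx) := by rw [one_sub_div h2, inv_div]
  have e3 : (zs/zt - 1)⁻¹ = zt/(zs - zt) := by rw [div_sub_one h2, inv_div]
  have e4 : (zt/zs - 1)⁻¹ = -(zs/(zs - zt)) := by
    rw [div_sub_one h1, inv_div, show zt - zs = -(zs - zt) from by ring, div_neg]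
  have hus : (zs - xx) * (zs - xx)⁻¹ = 1 := mul_inv_cancel₀ h6'
  have hut : (zt - xx) * (zt - xx)⁻¹ = 1 := mul_inv_cancel₀ h7'
  have hw : (zs - zt) * (zs - zt)⁻¹ = 1 := mul_inv_cancel₀ h3
  have hvt : zt * zt⁻¹ = 1 := mul_inv_cancel₀ h2
  have hq : xx^2 * (xx^2)⁻¹ = 1 := mul_inv_cancel₀ (pow_ne_zero 2 hx)
  rw [e1, e2, e3, e4, show xx - zs = -(zs - xx) from by ring,
    show xx - zt = -(zt - xx) from by ring, div_neg, div_neg]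
  linear_combination
    (c^2*(-(zs/(zs - xx)) * (zt/(zs - zt) * (zs/zt)) + -(zt/(zt - xx)) * (-(zs/(zs - zt)) * 1)))
      * hq
    + (-(c^2*(zs/(zs - xx))*zs*(zs - zt)⁻¹)) * hvt
    + (c^2*(zs/(zs - xx))*((zt/(zt - xx)) - 1)) * hw
    + (-(c^2*(zs - zt)⁻¹*zs*zt*(zt - xx)⁻¹)) * hus
    + (c^2*(zs - zt)⁻¹*zs*zt*(zs - xx)⁻¹) * hut

lemma keyOp (z : Fin n → ℂ) (hz0 : ∀ s, z s ≠ 0) (hzinj : Function.Injective z)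
    (μ x : ℂ) (hx0 : x ≠ 0) (hxz : ∀ s, x ≠ z s) :
    D2 m z μ x
      = ((2*(Real.pi:ℂ)*I*x)^2) • (DconjCoeff n m z μ x
          - ((∑ s, ((m s:ℂ)/2)/(x - z s))^2 + (∑ s, ((m s:ℂ)/2)/(x - z s)^2)
              - (∑ s, ((m s:ℂ)/2)/(x - z s))/x) • (1 : Module.End ℂ (TV m))) := by
  have hne : ∀ s, x - z s ≠ 0 := fun s => sub_ne_zero.2 (hxz s)
  have hne' : ∀ s, z s - x ≠ 0 := fun s => sub_ne_zero.2 fun e => hxz s e.symm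
  have hne2 : ∀ s, (1 : ℂ) - x / z s ≠ 0 := fun s => by
    rw [sub_ne_zero]
    intro hcon
    exact hxz s ((div_eq_one_iff_eq (hz0 s)).mp hcon.symm)
  rw [D2_eq, RHS_eq]
  congr 1
  · -- diagonal part
    refine mulShift_congr _ fun i => ?_
    simp only [dP, dQ, qfun, aa]
    set AS := ∑ s, (1 - x/z s)⁻¹ * al m s i with hAS
    set BS := ∑ s, al m s i with hBS
    set D1 := ∑ s, ((1 - x/z s)⁻¹ * al m s i) * ((1 - x/z s)⁻¹ * al m s i) with hD1
    set D2v := ∑ s, ((1 - x/z s)⁻¹ * al m s i) * al m s i with hD2v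
    set OffA := ∑ s, ∑ t ∈ Finset.univ.erase s,
        ((1 - x/z s)⁻¹ * al m s i) * ((1 - x/z t)⁻¹ * al m t i) with hOffA
    set OffB := ∑ s, ∑ t ∈ Finset.univ.erase s,
        ((1 - x/z s)⁻¹ * al m s i) * al m t i with hOffB
    set X2S := ∑ s, (2*(Real.pi:ℂ)*I)^2 * x * (z s)⁻¹ * ((1 - x/z s)⁻¹)^2 * al m s i
      with hX2S
    set X3S := ∑ s, (2*(Real.pi:ℂ)*I)^2 * (1 - x/z s)⁻¹ * ((1 - x/z s)⁻¹ - 1) * bd m s i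
      with hX3S
    set CU := ∑ s, ((z s/(x - z s)) * ((m s:ℂ)*((m s:ℂ)+2)/4)
        + (z s)^2 * ((m s:ℂ)*((m s:ℂ)+2)/4)/(x - z s)^2) with hCU
    set MD := ∑ s, (z s/(x - z s)) * al m s i with hMD
    set GG2 := ∑ s, ∑ t ∈ Finset.univ.erase s,
        (z s/(x - z s)) * ((z s/z t - 1)⁻¹ * (z s/z t + 1) * (al m s i * al m t i)) with hGG2
    have hQ : ∑ s, (2*(Real.pi:ℂ)*I*(1 - x/z s)⁻¹ - (Real.pi:ℂ)*I) * al m s i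
        = 2*(Real.pi:ℂ)*I*AS - (Real.pi:ℂ)*I*BS := by
      rw [hAS, hBS, Finset.mul_sum, Finset.mul_sum, ← Finset.sum_sub_distrib]
      exact Finset.sum_congr rfl fun s _ => by ring
    have hsc : -(1 / x) * (∑ s, ((m s : ℂ) / 2) / (x - z s))
          + (∑ s, ((m s : ℂ) * ((m s : ℂ) + 2) / 4) / (x - z s) ^ 2)
          + ∑ s, ∑ p ∈ Finset.univ.erase s,
              ((m s : ℂ) * (m p : ℂ) / 4) / ((x - z s) * (x - z p))
        = (∑ s, ((m s:ℂ)/2)/(x - z s))^2 + (∑ s, ((m s:ℂ)/2)/(x - z s)^2)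
            - (∑ s, ((m s:ℂ)/2)/(x - z s))/x := by
      have e1 : (∑ s, ((m s:ℂ)/2)/(x - z s))^2
          = ∑ s, (((m s:ℂ)/2)/(x - z s)) * (((m s:ℂ)/2)/(x - z s))
            + ∑ s, ∑ t ∈ Finset.univ.erase s,
                (((m s:ℂ)/2)/(x - z s)) * (((m t:ℂ)/2)/(x - z t)) := by
        rw [pow_two, Finset.sum_mul_sum, sum_univ_split]
      have e2 : ∑ s, ((m s : ℂ) * ((m s : ℂ) + 2) / 4) / (x - z s) ^ 2
          = ∑ s, ((((m s:ℂ)/2)/(x - z s)) * (((m s:ℂ)/2)/(x - z s))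
              + ((m s:ℂ)/2)/(x - z s)^2) := by
        exact Finset.sum_congr rfl fun s _ => by
          field_simp [hne s]
          ring
      have e3 : ∑ s, ∑ p ∈ Finset.univ.erase s,
            ((m s : ℂ) * (m p : ℂ) / 4) / ((x - z s) * (x - z p))
          = ∑ s, ∑ t ∈ Finset.univ.erase s,
              (((m s:ℂ)/2)/(x - z s)) * (((m t:ℂ)/2)/(x - z t)) := by
        refine Finset.sum_congr rfl fun s _ => Finset.sum_congr rfl fun t _ => ?_
        field_simp
        ring
      rw [e2, Finset.sum_add_distrib]
      linear_combination e3 - e1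
    have hT3 : ∑ s, ((z s/(x - z s)) * ((m s:ℂ)*((m s:ℂ)+2)/4
          + (μ * al m s i + ∑ t ∈ Finset.univ.erase s,
              (z s/z t - 1)⁻¹ * (z s/z t + 1) * (al m s i * al m t i)))
          + (z s)^2 * ((m s:ℂ)*((m s:ℂ)+2)/4)/(x - z s)^2)
        = CU + μ * MD + GG2 := by
      rw [hCU, hMD, hGG2, Finset.mul_sum, ← Finset.sum_add_distrib,
        ← Finset.sum_add_distrib]
      refine Finset.sum_congr rfl fun s _ => ?_
      rw [← Finset.mul_sum]
      ring
    have h1 : AS^2 = D1 + OffA := by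
      rw [hAS, hD1, hOffA, pow_two, Finset.sum_mul_sum, sum_univ_split]
    have h2 : AS*BS = D2v + OffB := by
      rw [hAS, hBS, hD2v, hOffB, Finset.sum_mul_sum, sum_univ_split]
    have h7 : AS + MD = 0 := by
      rw [hAS, hMD, ← Finset.sum_add_distrib]
      refine Finset.sum_eq_zero fun s _ => ?_
      rw [← add_mul]
      have : (1 - x/z s)⁻¹ + z s/(x - z s) = 0 := by
        rw [one_sub_div (hz0 s), inv_div, show x - z s = -(z s - x) from by ring, div_neg]
        ring
      rw [this, zero_mul]
    have h5 : -(4*((Real.pi:ℂ)*I)^2) * D1 + 4*((Real.pi:ℂ)*I)^2 * D2v + X2S - X3S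
        + 4*((Real.pi:ℂ)*I)^2 * CU = 0 := by
      rw [hD1, hD2v, hX2S, hX3S, hCU, Finset.mul_sum, Finset.mul_sum, Finset.mul_sum,
        ← Finset.sum_add_distrib, ← Finset.sum_add_distrib, ← Finset.sum_sub_distrib,
        ← Finset.sum_add_distrib]
      refine Finset.sum_eq_zero fun s _ => ?_
      simp only [al, bd]
      linear_combination persA (4*((Real.pi:ℂ)*I)^2) ((m s : ℂ)) (((i s : ℕ) : ℂ)) (z s) x
        (hz0 s) (hne s) (hne' s)
    have h6 : -(4*((Real.pi:ℂ)*I)^2) * OffA + 4*((Real.pi:ℂ)*I)^2 * OffB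
        + 4*((Real.pi:ℂ)*I)^2 * GG2 = 0 := by
      rw [hOffA, hOffB, hGG2]
      simp only [Finset.mul_sum]
      simp only [← Finset.sum_add_distrib]
      refine sum_erase_antisym _ fun s t hst => ?_
      have hzz : z s ≠ z t := fun e => hst (hzinj e)
      have hzz' : z s - z t ≠ 0 := sub_ne_zero.2 hzz
      linear_combination persB (4*((Real.pi:ℂ)*I)^2) x (z s) (z t) (al m s i) (al m t i)
        (hz0 s) (hz0 t) hzz' (hne s) (hne t) (hne' s) (hne' t)
    have hx2 : (2*(Real.pi:ℂ)*I*x)^2 * ((x:ℂ)^2)⁻¹ = 4*((Real.pi:ℂ)*I)^2 := by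
      field_simp
      ring
    have hx4 : (2*(Real.pi:ℂ)*I*x)^2 * ((4:ℂ)*x^2)⁻¹ = ((Real.pi:ℂ)*I)^2 := by
      field_simp
      ring
    rw [hQ, hsc, hT3]
    linear_combination (-(4*((Real.pi:ℂ)*I)^2)) * h1 + (4*((Real.pi:ℂ)*I)^2) * h2
      + h5 + h6 + (4*((Real.pi:ℂ)*I)^2*μ) * h7
      + (μ^2 + 2*μ*BS + BS^2) * hx4 + (CU + μ*MD + GG2) * hx2
  · -- off-diagonal part
    refine Finset.sum_congr rfl fun s _ => Finset.sum_congr rfl fun t ht => ?_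
    have hts : t ≠ s := (Finset.mem_erase.mp ht).1
    have hzz : z s ≠ z t := fun e => hts (hzinj e).symm
    have hzz' : z s - z t ≠ 0 := sub_ne_zero.2 hzz
    congr 1
    simp only [aa]
    linear_combination persC (2*(Real.pi:ℂ)*I) x (z s) (z t) (hz0 s) (hz0 t) hzz'
      (hne s) (hne t) (hne' s) (hne' t) hx0

lemma msum_eq (z : Fin n → ℂ) (x : ℂ) :
    ∑ s, (m s : ℂ) / (x - z s) = 2 * ∑ s, ((m s : ℂ)/2) / (x - z s) := by
  rw [Finset.mul_sum]
  exact Finset.sum_congr rfl fun s _ => by ring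

end Aux

/-- Theorem 8.1 of the paper: the conjugation formula
`𝒟ᶜ = (2πi x)⁻² Π_s (x-z_s)^{m_s/2} ∘ 𝒟 ∘ Π_s (x-z_s)^{-m_s/2}` for the universal
differential operator `𝒟 = ∂_u² + D₂(x)`, `∂_u = -2πi x ∂_x`.  Here `h` is a holomorphic
nowhere-vanishing branch of `Π_s (x-z_s)^{-m_s/2}` on an open `U ⊆ ℂ∖({0} ∪ {z_s})`,
specified by its logarithmic derivative, and `f` is an arbitrary holomorphic `V`-valued
function on `U`, with `g = h ⬝ f`. -/
theorem statement16
    (n : ℕ) (hn : 1 < n) (m : Fin n → ℕ) (hm : ∀ s, 0 < m s)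
    (z : Fin n → ℂ) (hz0 : ∀ s, z s ≠ 0) (hz : Function.Injective z) (μ : ℂ)
    (U : Set ℂ) (hU : IsOpen U)
    (hUavoid : ∀ x ∈ U, x ≠ 0 ∧ ∀ s, x ≠ z s)
    (h h' : ℂ → ℂ)
    (hh : ∀ x ∈ U, HasDerivAt h (h' x) x)
    (hh0 : ∀ x ∈ U, h x ≠ 0)
    (hhlog : ∀ x ∈ U, h' x / h x = -∑ s, ((m s : ℂ) / 2) / (x - z s))
    (f f' f'' : ℂ → TV m)
    (hf : ∀ x ∈ U, HasDerivAt f (f' x) x)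
    (hf' : ∀ x ∈ U, HasDerivAt f' (f'' x) x)
    (g g' g'' : ℂ → TV m)
    (hg : ∀ x, g x = h x • f x)
    (hg' : ∀ x ∈ U, HasDerivAt g (g' x) x)
    (hg'' : ∀ x ∈ U, HasDerivAt g' (g'' x) x) :
    ∀ x ∈ U,
      (((2 * (Real.pi : ℂ) * Complex.I * x) ^ 2)⁻¹ * (h x)⁻¹) •
          ((2 * (Real.pi : ℂ) * Complex.I) ^ 2 • (x ^ 2 • g'' x + x • g' x)
            + D2 m z μ x (h x • f x))
        = f'' x + (1 / x - ∑ s, (m s : ℂ) / (x - z s)) • f' x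
          + DconjCoeff n m z μ x (f x) := by
  intro x hx
  obtain ⟨hx0, hxz⟩ := hUavoid x hx
  have hU' : U ∈ nhds x := hU.mem_nhds hx
  have hne : ∀ s, x - z s ≠ 0 := fun s => sub_ne_zero.2 (hxz s)
  -- derivative of the logarithmic-derivative sum
  have hSd : HasDerivAt (fun y => ∑ s, ((m s:ℂ)/2)/(y - z s))
      (∑ s, (0 * (x - z s) - ((m s:ℂ)/2) * 1) / (x - z s)^2) x := by
    refine HasDerivAt.fun_sum fun s _ => ?_
    exact (hasDerivAt_const x ((m s:ℂ)/2)).div ((hasDerivAt_id x).sub_const (z s)) (hne s)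
  have hVal : (∑ s, (0 * (x - z s) - ((m s:ℂ)/2) * 1) / (x - z s)^2)
      = -∑ s, ((m s:ℂ)/2)/(x - z s)^2 := by
    rw [← Finset.sum_neg_distrib]
    exact Finset.sum_congr rfl fun s _ => by ring
  rw [hVal] at hSd
  -- the ODE for h
  have hh' : ∀ y ∈ U, h' y = (-∑ s, ((m s:ℂ)/2)/(y - z s)) * h y := fun y hy => by
    rw [← hhlog y hy, div_mul_cancel₀ _ (hh0 y hy)]
  -- first derivative of g
  have hg'eq : ∀ y ∈ U, g' y = h y • f' y + h' y • f y := fun y hy => by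
    have h1 : HasDerivAt (fun t => h t • f t) (h y • f' y + h' y • f y) y :=
      (hh y hy).smul (hf y hy)
    have h2 := hg' y hy
    rw [show g = fun t => h t • f t from funext hg] at h2
    exact h2.unique h1
  -- second derivative of h
  have hphi : HasDerivAt (fun y => (-∑ s, ((m s:ℂ)/2)/(y - z s)) * h y)
      ((-(-∑ s, ((m s:ℂ)/2)/(x - z s)^2)) * h x
        + (-∑ s, ((m s:ℂ)/2)/(x - z s)) * h' x) x := hSd.neg.mul (hh x hx)
  have hh'' : HasDerivAt h'
      ((-(-∑ s, ((m s:ℂ)/2)/(x - z s)^2)) * h x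
        + (-∑ s, ((m s:ℂ)/2)/(x - z s)) * h' x) x :=
    (Filter.EventuallyEq.hasDerivAt_iff
      (Filter.eventuallyEq_of_mem hU' fun y hy => hh' y hy)).mpr hphi
  -- second derivative of g
  have hpsi : HasDerivAt (fun y => h y • f' y + h' y • f y)
      ((h x • f'' x + h' x • f' x)
        + (h' x • f' x + ((-(-∑ s, ((m s:ℂ)/2)/(x - z s)^2)) * h x
            + (-∑ s, ((m s:ℂ)/2)/(x - z s)) * h' x) • f x)) x :=
    ((hh x hx).smul (hf' x hx)).add (hh''.smul (hf x hx))
  have hg''x : g'' x = (h x • f'' x + h' x • f' x)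
        + (h' x • f' x + ((-(-∑ s, ((m s:ℂ)/2)/(x - z s)^2)) * h x
            + (-∑ s, ((m s:ℂ)/2)/(x - z s)) * h' x) • f x) := by
    refine (hg'' x hx).unique ?_
    exact (Filter.EventuallyEq.hasDerivAt_iff
      (Filter.eventuallyEq_of_mem hU' fun y hy => hg'eq y hy)).mpr hpsi
  -- substitute everything
  rw [hg''x, hg'eq x hx, hh' x hx,
    keyOp m z hz0 hz μ x hx0 hxz,
    msum_eq m z x]
  have hh0x : h x ≠ 0 := hh0 x hx
  have hpix : (2*(Real.pi:ℂ)*I*x) ≠ 0 := by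
    simp [Real.pi_ne_zero, I_ne_zero, hx0]
  simp only [LinearMap.smul_apply, LinearMap.sub_apply, Module.End.one_apply, map_smul]
  match_scalars <;> (field_simp; try ring)



end
end Paper
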